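/- Fix m ∈ ℕ, v_s ∈ ℝ and α ∈ (0,1). Let v_r be the unique real number with Φ̄(v_r) = α Φ̄(v_s), and set C := φ(v_s)/φ(v_r). Then there exists K > 0, depending only on α and v_s, with the following property: for all bounded measurable functions g, s : ℝ^m → ℝ with ‖g‖_∞ + ‖s‖_∞ ≤ 1, define h(θ) := E[g(U_θ)] where U_θ has law N(θ, I_m), define S := {(u,v) ∈ ℝ^m × ℝ : v > v_s − s(u)}, and define the selective p-value p(u,v) := Φ̄(v + g(u)) / Φ̄(v_s − s(u) + g(u)). Then for every θ ∈ ℝ^m, with Y distributed N((θ, −h(θ)), I_{m+1}): |P(p(Y) < α) − α · P(Y ∈ S)| ≤ K (‖g‖_∞ + ‖s‖_∞)². That is, the test rejecting when the selective p-value is below α has selective rejection probability α along the boundary of the hypothesis region, up to an error quadratic in the magnitude of the surfaces. -/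

import Mathlib

open MeasureTheory ProbabilityTheory Set
open scoped NNReal

/-- The standard normal density. -/
noncomputable def stdphi (t : ℝ) : ℝ :=
  (Real.sqrt (2 * Real.pi))⁻¹ * Real.exp (-t ^ 2 / 2)

/-- The standard normal upper-tail probability Φ̄. -/
noncomputable def Phibar (x : ℝ) : ℝ := ∫ t in Set.Ioi x, stdphi t

/-- The Gaussian measure `N(μ, σ² I_m)` on `ℝ^m` as a product of one-dimensional
Gaussian measures. -/
noncomputable def gaussianPi {m : ℕ} (μ : Fin m → ℝ) (v : ℝ≥0) :
    Measure (Fin m → ℝ) :=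
  Measure.pi fun i => gaussianReal (μ i) v

lemma stdphi_pos (t : ℝ) : 0 < stdphi t := by
  have h : 0 < Real.sqrt (2 * Real.pi) := Real.sqrt_pos.2 (by positivity)
  exact mul_pos (inv_pos.2 h) (Real.exp_pos _)

lemma sqrt_two_pi_ge_one : (1:ℝ) ≤ Real.sqrt (2 * Real.pi) := by
  rw [show (1:ℝ) = Real.sqrt 1 by simp]
  exact Real.sqrt_le_sqrt (by nlinarith [Real.pi_gt_three])

lemma stdphi_le_one (t : ℝ) : stdphi t ≤ 1 := by
  have h1 : (Real.sqrt (2 * Real.pi))⁻¹ ≤ 1 := by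
    rw [inv_le_one_iff₀]; right; exact sqrt_two_pi_ge_one
  have h2 : Real.exp (-t ^ 2 / 2) ≤ 1 := by
    rw [Real.exp_le_one_iff]; nlinarith [sq_nonneg t]
  calc stdphi t ≤ 1 * 1 := by
        refine mul_le_mul h1 h2 (Real.exp_pos _).le (by norm_num)
    _ = 1 := by norm_num

lemma stdphi_continuous : Continuous stdphi := by
  unfold stdphi; fun_prop

lemma stdphi_integrable : Integrable stdphi := by
  have : Integrable (fun t : ℝ => Real.exp (-(1/2) * t ^ 2)) := integrable_exp_neg_mul_sq (by norm_num)
  have h := this.const_mul ((Real.sqrt (2 * Real.pi))⁻¹)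
  refine h.congr (Filter.Eventually.of_forall fun t => ?_)
  unfold stdphi; ring_nf

lemma integral_stdphi : ∫ t, stdphi t = 1 := by
  have h : ∫ t : ℝ, Real.exp (-(1/2) * t ^ 2) = Real.sqrt (Real.pi / (1/2)) :=
    integral_gaussian (1/2)
  have h2 : ∫ t, stdphi t = (Real.sqrt (2 * Real.pi))⁻¹ * ∫ t : ℝ, Real.exp (-(1/2) * t ^ 2) := by
    rw [← integral_const_mul]
    congr 1 with t; unfold stdphi; ring_nf
  rw [h2, h, show Real.pi / (1/2) = 2 * Real.pi by ring]
  exact inv_mul_cancel₀ (by positivity)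

lemma hasDerivAt_stdphi (t : ℝ) : HasDerivAt stdphi (-t * stdphi t) t := by
  have h1 : HasDerivAt (fun u : ℝ => -u ^ 2 / 2) (-t) t := by
    have := ((hasDerivAt_pow 2 t).neg.div_const 2)
    simpa using this.congr_deriv (by ring)
  have h2 := (h1.exp).const_mul ((Real.sqrt (2 * Real.pi))⁻¹)
  refine h2.congr_deriv ?_
  unfold stdphi; ring

lemma abs_mul_stdphi_le (t : ℝ) : |(-t) * stdphi t| ≤ 1 := by
  have h1 : |t| ≤ Real.exp (t ^ 2 / 2) := by
    have := Real.add_one_le_exp (t ^ 2 / 2)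
    nlinarith [sq_nonneg (|t| - 1), sq_abs t]
  have h2 : |(-t) * stdphi t| = |t| * stdphi t := by
    rw [abs_mul, abs_neg, abs_of_pos (stdphi_pos t)]
  rw [h2]
  have h3 : stdphi t ≤ Real.exp (-t ^ 2 / 2) := by
    unfold stdphi
    have h1 : (Real.sqrt (2 * Real.pi))⁻¹ ≤ 1 := by
      rw [inv_le_one_iff₀]; right; exact sqrt_two_pi_ge_one
    nlinarith [Real.exp_pos (-t^2/2)]
  calc |t| * stdphi t ≤ Real.exp (t ^ 2 / 2) * Real.exp (-t ^ 2 / 2) := by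
        refine mul_le_mul h1 h3 (stdphi_pos t).le (Real.exp_pos _).le
    _ = 1 := by rw [← Real.exp_add]; ring_nf; exact Real.exp_zero

lemma stdphi_lipschitz (a b : ℝ) : |stdphi a - stdphi b| ≤ |a - b| := by
  have hint : IntervalIntegrable (fun t => -t * stdphi t) volume b a :=
    (Continuous.mul (continuous_neg) stdphi_continuous).intervalIntegrable b a
  have h := intervalIntegral.integral_eq_sub_of_hasDerivAt
    (f := stdphi) (f' := fun t => -t * stdphi t)
    (fun t _ => hasDerivAt_stdphi t) hint
  have hb := intervalIntegral.norm_integral_le_of_norm_le_const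
    (C := 1) (f := fun t => -t * stdphi t) (a := b) (b := a)
    (fun t _ => by rw [Real.norm_eq_abs]; exact abs_mul_stdphi_le t)
  rw [h] at hb
  simpa [Real.norm_eq_abs, abs_sub_comm] using hb

lemma phibar_interval (a b : ℝ) : Phibar a - Phibar b = ∫ t in a..b, stdphi t := by
  have hIic : ∀ x : ℝ, IntegrableOn stdphi (Iic x) := fun x => stdphi_integrable.integrableOn
  have hIoi : ∀ x : ℝ, IntegrableOn stdphi (Ioi x) := fun x => stdphi_integrable.integrableOn
  have h1 : ∀ x : ℝ, Phibar x = (∫ t, stdphi t) - ∫ t in Iic x, stdphi t := by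
    intro x
    have := intervalIntegral.integral_Iic_add_Ioi (μ := volume) (f := stdphi) (b := x) (hIic x) (hIoi x)
    unfold Phibar; linarith
  rw [h1 a, h1 b, ← intervalIntegral.integral_Iic_sub_Iic (hIic a) (hIic b)]
  ring

lemma phibar_nonneg (x : ℝ) : 0 ≤ Phibar x :=
  setIntegral_nonneg measurableSet_Ioi fun t _ => (stdphi_pos t).le

lemma phibar_strictAnti : StrictAnti Phibar := by
  intro a b hab
  have h := phibar_interval a b
  have hpos : 0 < ∫ t in a..b, stdphi t :=
    intervalIntegral.intervalIntegral_pos_of_pos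
      (stdphi_continuous.intervalIntegrable a b) (fun t => stdphi_pos t) hab
  linarith

lemma phibar_pos (x : ℝ) : 0 < Phibar x := by
  have h := phibar_interval x (x + 1)
  have hpos : 0 < ∫ t in x..(x+1), stdphi t :=
    intervalIntegral.intervalIntegral_pos_of_pos
      (stdphi_continuous.intervalIntegrable _ _) (fun t => stdphi_pos t) (by linarith)
  have := phibar_nonneg (x + 1)
  linarith

lemma phibar_lt_one (x : ℝ) : Phibar x < 1 := by
  have hIic : IntegrableOn stdphi (Iic x) := stdphi_integrable.integrableOn
  have hIoi : IntegrableOn stdphi (Ioi x) := stdphi_integrable.integrableOn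
  have htot := intervalIntegral.integral_Iic_add_Ioi (μ := volume) (f := stdphi) (b := x) hIic hIoi
  rw [integral_stdphi] at htot
  have h2 : 0 < ∫ t in (x-1)..x, stdphi t :=
    intervalIntegral.intervalIntegral_pos_of_pos
      (stdphi_continuous.intervalIntegrable _ _) (fun t => stdphi_pos t) (by linarith)
  have h3 : ∫ t in (x-1)..x, stdphi t ≤ ∫ t in Iic x, stdphi t := by
    rw [intervalIntegral.integral_of_le (by linarith : x - 1 ≤ x)]
    exact setIntegral_mono_set hIic
      (Filter.Eventually.of_forall fun t => (stdphi_pos t).le)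
      (HasSubset.Subset.eventuallyLE Ioc_subset_Iic_self)
  unfold Phibar; linarith

lemma phibar_lip (a b : ℝ) : |Phibar a - Phibar b| ≤ |a - b| := by
  rw [phibar_interval a b]
  have hb := intervalIntegral.norm_integral_le_of_norm_le_const
    (C := 1) (f := stdphi) (a := a) (b := b)
    (fun t _ => by rw [Real.norm_eq_abs, abs_of_pos (stdphi_pos t)]; exact stdphi_le_one t)
  simpa [Real.norm_eq_abs, abs_sub_comm] using hb

lemma phibar_taylor (a y : ℝ) : |Phibar (a + y) - Phibar a + stdphi a * y| ≤ y ^ 2 := by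
  have h1 : Phibar a - Phibar (a + y) = ∫ t in a..(a+y), stdphi t := phibar_interval a (a + y)
  have h2 : ∫ t in (0:ℝ)..y, stdphi (t + a) = ∫ t in a..(y+a), stdphi t := by
    simpa using intervalIntegral.integral_comp_add_right (a := (0:ℝ)) (b := y) (f := stdphi) a
  have h3 : stdphi a * y = ∫ t in (0:ℝ)..y, stdphi a := by
    rw [intervalIntegral.integral_const, sub_zero, smul_eq_mul, mul_comm]
  have key : Phibar (a + y) - Phibar a + stdphi a * y
      = ∫ t in (0:ℝ)..y, (stdphi a - stdphi (t + a)) := by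
    have hc : Continuous (fun t : ℝ => stdphi (t + a)) := by
      have := stdphi_continuous; fun_prop
    rw [intervalIntegral.integral_sub (intervalIntegrable_const) (hc.intervalIntegrable _ _)]
    rw [h2, ← h3]
    rw [show a + y = y + a from by ring] at h1 ⊢
    linarith
  rw [key]
  have hb := intervalIntegral.norm_integral_le_of_norm_le_const
    (C := |y|) (f := fun t => stdphi a - stdphi (t + a)) (a := (0:ℝ)) (b := y)
    (fun t ht => by
      rw [Real.norm_eq_abs]
      have h4 : |stdphi a - stdphi (t + a)| ≤ |a - (t + a)| := stdphi_lipschitz a (t + a)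
      have h5 : |a - (t + a)| = |t| := by rw [show a - (t + a) = -t by ring, abs_neg]
      have h6 : |t| ≤ |y| := by
        rw [Set.uIoc_eq_union] at ht
        rcases ht with ht | ht <;> rw [abs_le] <;> constructor <;>
          simp only [Set.mem_Ioc] at ht <;> cases' abs_le.1 (le_refl |y|) with hy1 hy2 <;>
          nlinarith [abs_nonneg y, le_abs_self y, neg_abs_le y]
      linarith)
  rw [Real.norm_eq_abs] at hb
  calc |∫ t in (0:ℝ)..y, (stdphi a - stdphi (t + a))| ≤ |y| * |y - 0| := hb
    _ = y ^ 2 := by rw [sub_zero, ← abs_mul, ← sq, abs_of_nonneg (sq_nonneg y)]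

lemma phibar_lipschitzWith : LipschitzWith 1 Phibar :=
  LipschitzWith.of_dist_le_mul (fun a b => by
    rw [Real.dist_eq, Real.dist_eq, NNReal.coe_one, one_mul]; exact phibar_lip a b)

lemma phibar_continuous : Continuous Phibar := phibar_lipschitzWith.continuous

lemma phibar_tendsto_atTop : Filter.Tendsto Phibar Filter.atTop (nhds 0) := by
  have hcov : AECover (volume : Measure ℝ) Filter.atTop (fun x : ℝ => Iic x) :=
    aecover_Iic Filter.tendsto_id
  have h := hcov.integral_tendsto_of_countably_generated stdphi_integrable
  rw [integral_stdphi] at h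
  have heq : ∀ x : ℝ, Phibar x = 1 - ∫ t in Iic x, stdphi t := by
    intro x
    have := intervalIntegral.integral_Iic_add_Ioi (μ := volume) (f := stdphi) (b := x)
      stdphi_integrable.integrableOn stdphi_integrable.integrableOn
    rw [integral_stdphi] at this
    unfold Phibar; linarith
  have : Filter.Tendsto (fun x : ℝ => 1 - ∫ t in Iic x, stdphi t) Filter.atTop (nhds (1 - 1)) :=
    (tendsto_const_nhds.sub h)
  simpa [heq] using this.congr (fun x => (heq x).symm)

lemma phibar_tendsto_atBot : Filter.Tendsto Phibar Filter.atBot (nhds 1) := by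
  have hcov : AECover (volume : Measure ℝ) Filter.atBot (fun x : ℝ => Ioi x) :=
    aecover_Ioi Filter.tendsto_id
  have h := hcov.integral_tendsto_of_countably_generated stdphi_integrable
  rw [integral_stdphi] at h
  exact h

lemma phibar_surj {y : ℝ} (hy0 : 0 < y) (hy1 : y < 1) : ∃ x, Phibar x = y := by
  obtain ⟨b, hb⟩ := (phibar_tendsto_atTop.eventually_lt_const hy0).exists
  obtain ⟨a, ha⟩ := (phibar_tendsto_atBot.eventually_const_lt hy1).exists
  have hab : a ≤ b := by
    by_contra hc
    push_neg at hc
    have := phibar_strictAnti hc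
    linarith
  have : y ∈ Icc (Phibar b) (Phibar a) := ⟨hb.le, ha.le⟩
  obtain ⟨x, _, hx⟩ := intermediate_value_Icc' hab phibar_continuous.continuousOn this
  exact ⟨x, hx⟩

/-- The threshold function: `Tsel vs α x` solves `Φ̄(T) = α Φ̄(vs + x)`. -/
noncomputable def Tsel (vs α : ℝ) (x : ℝ) : ℝ :=
  @dite _ (∃ t, Phibar t = α * Phibar (vs + x)) (Classical.dec _) (fun h => h.choose) (fun _ => 0)

lemma Tsel_spec {vs α : ℝ} (hα0 : 0 < α) (hα1 : α < 1) (x : ℝ) :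
    Phibar (Tsel vs α x) = α * Phibar (vs + x) := by
  have hp := phibar_pos (vs + x)
  have hl := phibar_lt_one (vs + x)
  have hex : ∃ t, Phibar t = α * Phibar (vs + x) :=
    phibar_surj (mul_pos hα0 hp) (by nlinarith)
  rw [Tsel, dif_pos hex]
  exact hex.choose_spec

lemma Tsel_monotone {vs α : ℝ} (hα0 : 0 < α) (hα1 : α < 1) : Monotone (Tsel vs α) := by
  intro x y hxy
  have hx := Tsel_spec (vs := vs) hα0 hα1 x
  have hy := Tsel_spec (vs := vs) hα0 hα1 y
  have h1 : Phibar (Tsel vs α y) ≤ Phibar (Tsel vs α x) := by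
    rw [hx, hy]
    exact mul_le_mul_of_nonneg_left (phibar_strictAnti.antitone (by linarith)) hα0.le
  exact (phibar_strictAnti.le_iff_ge).1 h1

lemma phibar_lower {A B a b c : ℝ} (hab : a ≤ b) (hA : A ≤ a) (hB : b ≤ B)
    (hc : ∀ t ∈ Icc A B, c ≤ stdphi t) : c * (b - a) ≤ Phibar a - Phibar b := by
  rw [phibar_interval a b]
  have h1 : ∫ t in a..b, c ≤ ∫ t in a..b, stdphi t := by
    refine intervalIntegral.integral_mono_on hab intervalIntegrable_const
      (stdphi_continuous.intervalIntegrable a b) (fun t ht => ?_)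
    exact hc t ⟨hA.trans ht.1, ht.2.trans hB⟩
  rw [intervalIntegral.integral_const, smul_eq_mul, mul_comm] at h1
  linarith

lemma G_bound {vs α vr L : ℝ} (hα0 : 0 < α) (hα1 : α < 1) (hL0 : 0 ≤ L)
    (hL : ∀ x : ℝ, |x| ≤ 1 → |Tsel vs α x - vr| ≤ L * |x|)
    {x y : ℝ} (hx : |x| ≤ 1) :
    |Phibar (Tsel vs α x + y) - α * Phibar (vs + x + y)
      + (stdphi vr - α * stdphi vs) * y| ≤ (1 + 2 * α + L) * (x ^ 2 + y ^ 2) := by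
  set T := Tsel vs α x with hT
  have hspec : Phibar T = α * Phibar (vs + x) := Tsel_spec hα0 hα1 x
  have hE1 : |Phibar (T + y) - Phibar T + stdphi T * y| ≤ y ^ 2 := phibar_taylor T y
  have hE2 : |Phibar (vs + x + y) - Phibar (vs + x) + stdphi (vs + x) * y| ≤ y ^ 2 :=
    phibar_taylor (vs + x) y
  have h3 : |(stdphi vr - stdphi T) * y| ≤ L * (x ^ 2 + y ^ 2) := by
    rw [abs_mul]
    have := stdphi_lipschitz vr T
    have hTl := hL x hx
    have h4 : |stdphi vr - stdphi T| ≤ L * |x| := by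
      calc |stdphi vr - stdphi T| ≤ |vr - T| := stdphi_lipschitz vr T
        _ = |T - vr| := abs_sub_comm vr T
        _ ≤ L * |x| := hTl
    calc |stdphi vr - stdphi T| * |y| ≤ (L * |x|) * |y| :=
          mul_le_mul_of_nonneg_right h4 (abs_nonneg y)
      _ ≤ L * (x ^ 2 + y ^ 2) := by nlinarith [sq_nonneg (|x| - |y|), sq_abs x, sq_abs y, abs_nonneg x, abs_nonneg y]
  have h4 : |α * (stdphi vs - stdphi (vs + x)) * y| ≤ α * (x ^ 2 + y ^ 2) := by
    rw [abs_mul, abs_mul, abs_of_pos hα0]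
    have h5 : |stdphi vs - stdphi (vs + x)| ≤ |x| := by
      calc |stdphi vs - stdphi (vs + x)| ≤ |vs - (vs + x)| := stdphi_lipschitz _ _
        _ = |x| := by rw [show vs - (vs + x) = -x by ring, abs_neg]
    calc α * |stdphi vs - stdphi (vs + x)| * |y| ≤ α * (|x| * |y|) := by
          rw [mul_assoc]
          exact mul_le_mul_of_nonneg_left
            (mul_le_mul_of_nonneg_right h5 (abs_nonneg y)) hα0.le
      _ ≤ α * (x ^ 2 + y ^ 2) := by
          refine mul_le_mul_of_nonneg_left ?_ hα0.le
          nlinarith [sq_nonneg (|x| - |y|), sq_abs x, sq_abs y, abs_nonneg x, abs_nonneg y]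
  have key : Phibar (T + y) - α * Phibar (vs + x + y) + (stdphi vr - α * stdphi vs) * y
      = (Phibar (T + y) - Phibar T + stdphi T * y)
        - α * (Phibar (vs + x + y) - Phibar (vs + x) + stdphi (vs + x) * y)
        + (stdphi vr - stdphi T) * y - α * (stdphi vs - stdphi (vs + x)) * y := by
    rw [hspec]; ring
  rw [key]
  have habs : |α * (Phibar (vs + x + y) - Phibar (vs + x) + stdphi (vs + x) * y)| ≤ α * y ^ 2 := by
    rw [abs_mul, abs_of_pos hα0]
    exact mul_le_mul_of_nonneg_left hE2 hα0.le
  calc |(Phibar (T + y) - Phibar T + stdphi T * y)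
        - α * (Phibar (vs + x + y) - Phibar (vs + x) + stdphi (vs + x) * y)
        + (stdphi vr - stdphi T) * y - α * (stdphi vs - stdphi (vs + x)) * y|
      ≤ |(Phibar (T + y) - Phibar T + stdphi T * y)|
        + |α * (Phibar (vs + x + y) - Phibar (vs + x) + stdphi (vs + x) * y)|
        + |(stdphi vr - stdphi T) * y| + |α * (stdphi vs - stdphi (vs + x)) * y| := by
        have := abs_sub (G := ℝ)
        calc _ ≤ |(Phibar (T + y) - Phibar T + stdphi T * y)
              - α * (Phibar (vs + x + y) - Phibar (vs + x) + stdphi (vs + x) * y)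
              + (stdphi vr - stdphi T) * y| + |α * (stdphi vs - stdphi (vs + x)) * y| :=
              abs_sub _ _
          _ ≤ _ := by
              gcongr ?_ + _
              calc _ ≤ |(Phibar (T + y) - Phibar T + stdphi T * y)
                    - α * (Phibar (vs + x + y) - Phibar (vs + x) + stdphi (vs + x) * y)|
                    + |(stdphi vr - stdphi T) * y| := abs_add_le _ _
                _ ≤ _ := by
                    gcongr ?_ + _
                    exact abs_sub _ _
    _ ≤ y ^ 2 + α * y ^ 2 + L * (x ^ 2 + y ^ 2) + α * (x ^ 2 + y ^ 2) := by
        gcongr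
    _ ≤ (1 + 2 * α + L) * (x ^ 2 + y ^ 2) := by nlinarith [sq_nonneg x, sq_nonneg y]

instance gaussianPi_prob {m : ℕ} (μ : Fin m → ℝ) (v : ℝ≥0) :
    IsProbabilityMeasure (gaussianPi μ v) := by
  rw [gaussianPi]; infer_instance

lemma gaussianReal_Ioi (μ0 a : ℝ) :
    gaussianReal μ0 1 (Ioi a) = ENNReal.ofReal (Phibar (a - μ0)) := by
  rw [gaussianReal_apply_eq_integral μ0 (by norm_num) (Ioi a)]
  congr 1
  have hpdf : ∀ x, gaussianPDFReal μ0 1 x = stdphi (x - μ0) := by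
    intro x
    unfold gaussianPDFReal stdphi
    norm_num
  have h1 : ∫ x in Ioi a, gaussianPDFReal μ0 1 x = ∫ x in Ioi a, stdphi (x - μ0) :=
    setIntegral_congr_fun measurableSet_Ioi (fun x _ => hpdf x)
  have h2 : (fun x => (Ioi a).indicator (fun x => stdphi (x - μ0)) x)
      = fun x => (Ioi (a - μ0)).indicator stdphi (x - μ0) := by
    ext x
    by_cases hx : a < x
    · rw [indicator_of_mem (mem_Ioi.mpr hx), indicator_of_mem (mem_Ioi.mpr (by linarith))]
    · rw [indicator_of_notMem (fun h => hx (mem_Ioi.mp h)),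
        indicator_of_notMem (fun h => hx (by have := mem_Ioi.mp h; linarith))]
  rw [h1, ← integral_indicator measurableSet_Ioi, h2,
    integral_sub_right_eq_self ((Ioi (a - μ0)).indicator stdphi) μ0,
    integral_indicator measurableSet_Ioi]
  rfl

lemma prod_measure_toReal {m : ℕ} (θ : Fin m → ℝ) (μ0 : ℝ)
    (c : (Fin m → ℝ) → ℝ) (hc : Measurable c) :
    (((gaussianPi θ 1).prod (gaussianReal μ0 1))
        {p : (Fin m → ℝ) × ℝ | c p.1 < p.2}).toReal
      = ∫ u, Phibar (c u - μ0) ∂(gaussianPi θ 1) := by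
  have hset : MeasurableSet {p : (Fin m → ℝ) × ℝ | c p.1 < p.2} :=
    measurableSet_lt (hc.comp measurable_fst) measurable_snd
  rw [Measure.prod_apply hset]
  have h1 : ∀ u : Fin m → ℝ,
      (Prod.mk u ⁻¹' {p : (Fin m → ℝ) × ℝ | c p.1 < p.2}) = Ioi (c u) := by
    intro u; ext v; simp [mem_Ioi]
  have h2 : (∫⁻ u, gaussianReal μ0 1 (Prod.mk u ⁻¹' {p : (Fin m → ℝ) × ℝ | c p.1 < p.2})
        ∂(gaussianPi θ 1))
      = ∫⁻ u, ENNReal.ofReal (Phibar (c u - μ0)) ∂(gaussianPi θ 1) := by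
    refine lintegral_congr fun u => ?_
    rw [h1 u, gaussianReal_Ioi]
  rw [h2]
  rw [integral_eq_lintegral_of_nonneg_ae (f := fun u => Phibar (c u - μ0))
    (Filter.Eventually.of_forall fun u => phibar_nonneg _)
    ((phibar_continuous.measurable.comp (hc.sub measurable_const)).aestronglyMeasurable)]

set_option maxHeartbeats 1000000 in
/-- Theorem 4 (approximately unbiased selective p-value in the theory of nearly flat
surfaces): with `h = E₁ g` and the selective p-value
`p(u,v) = Φ̄(v + g(u))/Φ̄(v_s − s(u) + g(u))`, the test rejecting when `p(Y) < α`
has, along the boundary of the hypothesis region, rejection probability equal to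
`α` times the selection probability of `S`, up to an error quadratic in
`‖g‖_∞ + ‖s‖_∞`. -/
theorem stmt_12 (m : ℕ) (vs α : ℝ) (hα : α ∈ Set.Ioo (0 : ℝ) 1)
    (vr : ℝ) (hvr : Phibar vr = α * Phibar vs) :
    ∃ K : ℝ, 0 < K ∧
      ∀ g s : (Fin m → ℝ) → ℝ, Measurable g → Measurable s →
        BddAbove (Set.range fun x => |g x|) →
        BddAbove (Set.range fun x => |s x|) →
        (⨆ x, |g x|) + (⨆ x, |s x|) ≤ 1 →
        ∀ θ : Fin m → ℝ,
          |(((gaussianPi θ 1).prod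
                (gaussianReal (-(∫ x, g x ∂(gaussianPi θ 1))) 1))
              {p : (Fin m → ℝ) × ℝ |
                Phibar (p.2 + g p.1) / Phibar (vs - s p.1 + g p.1) < α}).toReal
            - α * (((gaussianPi θ 1).prod
                (gaussianReal (-(∫ x, g x ∂(gaussianPi θ 1))) 1))
              {p : (Fin m → ℝ) × ℝ | vs - s p.1 < p.2}).toReal|
          ≤ K * ((⨆ x, |g x|) + ⨆ x, |s x|) ^ 2 := by
  obtain ⟨hα0, hα1⟩ := hα
  have hT0 : Tsel vs α 0 = vr := by
    apply phibar_strictAnti.injective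
    rw [Tsel_spec (vs := vs) hα0 hα1 0, add_zero]
    exact hvr.symm
  have hTmono := Tsel_monotone (vs := vs) (α := α) hα0 hα1
  have hTmeas : Measurable (Tsel vs α) := hTmono.measurable
  set A := Tsel vs α (-1) with hA
  set B := Tsel vs α 1 with hB
  have hAB : A ≤ B := hTmono (by norm_num)
  obtain ⟨t0, ht0mem, ht0min⟩ := isCompact_Icc.exists_isMinOn (nonempty_Icc.mpr hAB)
    stdphi_continuous.continuousOn
  set mφ := stdphi t0 with hmφdef
  have hmφ : 0 < mφ := stdphi_pos t0
  set L := α / mφ with hLdef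
  have hL0 : 0 ≤ L := div_nonneg hα0.le hmφ.le
  have hTL : ∀ x : ℝ, |x| ≤ 1 → |Tsel vs α x - vr| ≤ L * |x| := by
    intro x hx
    have hx1 : (-1 : ℝ) ≤ x := neg_le_of_abs_le hx
    have hx2 : x ≤ 1 := le_of_abs_le hx
    have hmemx : Tsel vs α x ∈ Icc A B := ⟨hTmono hx1, hTmono hx2⟩
    have hmem0 : vr ∈ Icc A B := by
      rw [← hT0]
      exact ⟨hTmono (by norm_num), hTmono (by norm_num)⟩
    have hup : |Phibar (Tsel vs α x) - Phibar vr| ≤ α * |x| := by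
      rw [Tsel_spec hα0 hα1 x, hvr, ← mul_sub, abs_mul, abs_of_pos hα0]
      refine mul_le_mul_of_nonneg_left ?_ hα0.le
      calc |Phibar (vs + x) - Phibar vs| ≤ |(vs + x) - vs| := phibar_lip _ _
        _ = |x| := by rw [add_sub_cancel_left]
    have hmin : ∀ t ∈ Icc A B, mφ ≤ stdphi t := fun t ht => isMinOn_iff.mp ht0min t ht
    have hlow : mφ * |Tsel vs α x - vr| ≤ |Phibar (Tsel vs α x) - Phibar vr| := by
      rcases le_total (Tsel vs α x) vr with hle | hle
      · have h1 := phibar_lower hle hmemx.1 hmem0.2 hmin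
        have h2 : |Tsel vs α x - vr| = vr - Tsel vs α x := by
          rw [abs_of_nonpos (by linarith)]; ring
        rw [h2]
        exact h1.trans (le_abs_self _)
      · have h1 := phibar_lower hle hmem0.1 hmemx.2 hmin
        have h2 : |Tsel vs α x - vr| = Tsel vs α x - vr := abs_of_nonneg (by linarith)
        rw [h2, abs_sub_comm]
        exact h1.trans (le_abs_self _)
    rw [hLdef, div_mul_eq_mul_div, le_div_iff₀ hmφ]
    calc |Tsel vs α x - vr| * mφ = mφ * |Tsel vs α x - vr| := by ring
      _ ≤ |Phibar (Tsel vs α x) - Phibar vr| := hlow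
      _ ≤ α * |x| := hup
  set C0 := 1 + 2 * α + L with hC0
  have hC0pos : 0 < C0 := by rw [hC0]; nlinarith
  refine ⟨5 * C0, by nlinarith, ?_⟩
  intro g s hg hs hbg hbs hsum θ
  set εg := ⨆ x, |g x| with hεg
  set εs := ⨆ x, |s x| with hεs
  have hgle : ∀ u, |g u| ≤ εg := fun u => le_ciSup hbg u
  have hsle : ∀ u, |s u| ≤ εs := fun u => le_ciSup hbs u
  have hεg0 : 0 ≤ εg := le_trans (abs_nonneg _) (hgle (fun _ => 0))
  have hεs0 : 0 ≤ εs := le_trans (abs_nonneg _) (hsle (fun _ => 0))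
  set hmean := ∫ x, g x ∂(gaussianPi θ 1) with hmeandef
  have hgint : Integrable g (gaussianPi θ 1) :=
    Integrable.mono' (integrable_const εg) hg.aestronglyMeasurable
      (Filter.Eventually.of_forall fun u => by rw [Real.norm_eq_abs]; exact hgle u)
  have hmabs : |hmean| ≤ εg := by
    have h1 := norm_integral_le_of_norm_le (μ := gaussianPi θ 1) (f := g)
      (integrable_const εg)
      (Filter.Eventually.of_forall fun u => by rw [Real.norm_eq_abs]; exact hgle u)
    rw [Real.norm_eq_abs] at h1
    rw [hmeandef]
    calc |∫ x, g x ∂(gaussianPi θ 1)| ≤ ∫ _, εg ∂(gaussianPi θ 1) := h1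
      _ = εg := by simp [integral_const, measure_univ]
  -- rewrite the rejection set
  have e1 : {p : (Fin m → ℝ) × ℝ |
        Phibar (p.2 + g p.1) / Phibar (vs - s p.1 + g p.1) < α}
      = {p : (Fin m → ℝ) × ℝ | (fun u => Tsel vs α (g u - s u) - g u) p.1 < p.2} := by
    ext p
    simp only [mem_setOf_eq]
    rw [div_lt_iff₀ (phibar_pos _),
      show vs - s p.1 + g p.1 = vs + (g p.1 - s p.1) from by ring,
      ← Tsel_spec hα0 hα1 (g p.1 - s p.1), phibar_strictAnti.lt_iff_gt]
    exact sub_lt_iff_lt_add.symm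
  have e2 : {p : (Fin m → ℝ) × ℝ | vs - s p.1 < p.2}
      = {p : (Fin m → ℝ) × ℝ | (fun u => vs - s u) p.1 < p.2} := rfl
  have hc1m : Measurable (fun u => Tsel vs α (g u - s u) - g u) :=
    (hTmeas.comp (hg.sub hs)).sub hg
  have hc2m : Measurable (fun u : Fin m → ℝ => vs - s u) := measurable_const.sub hs
  rw [e1, e2, prod_measure_toReal θ _ _ hc1m, prod_measure_toReal θ _ _ hc2m]
  simp only [sub_neg_eq_add]
  -- now the analytic estimate
  have hmes1 : Measurable (fun u => Phibar (Tsel vs α (g u - s u) - g u + hmean)) :=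
    phibar_continuous.measurable.comp (hc1m.add_const hmean)
  have hmes2 : Measurable (fun u => Phibar (vs - s u + hmean)) :=
    phibar_continuous.measurable.comp (hc2m.add_const hmean)
  have hbd : ∀ z : ℝ, ‖Phibar z‖ ≤ 1 := fun z => by
    rw [Real.norm_eq_abs, abs_of_nonneg (phibar_nonneg z)]
    exact (phibar_lt_one z).le
  have hi1 : Integrable (fun u => Phibar (Tsel vs α (g u - s u) - g u + hmean))
      (gaussianPi θ 1) :=
    Integrable.mono' (integrable_const 1) hmes1.aestronglyMeasurable
      (Filter.Eventually.of_forall fun u => hbd _)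
  have hi2 : Integrable (fun u => Phibar (vs - s u + hmean)) (gaussianPi θ 1) :=
    Integrable.mono' (integrable_const 1) hmes2.aestronglyMeasurable
      (Filter.Eventually.of_forall fun u => hbd _)
  rw [← integral_const_mul, ← integral_sub hi1 (hi2.const_mul α)]
  -- add the centering term c * (hmean - g u), whose integral vanishes
  set c := stdphi vr - α * stdphi vs with hcdef
  have hyint : Integrable (fun u => hmean - g u) (gaussianPi θ 1) :=
    (integrable_const hmean).sub hgint
  have hy0 : ∫ u, (hmean - g u) ∂(gaussianPi θ 1) = 0 := by
    rw [integral_sub (integrable_const hmean) hgint, integral_const]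
    simp [measure_univ, hmeandef]
  have hFint : Integrable (fun u => Phibar (Tsel vs α (g u - s u) - g u + hmean)
      - α * Phibar (vs - s u + hmean)) (gaussianPi θ 1) := hi1.sub (hi2.const_mul α)
  have hsplit : ∫ u, (Phibar (Tsel vs α (g u - s u) - g u + hmean)
        - α * Phibar (vs - s u + hmean)) ∂(gaussianPi θ 1)
      = ∫ u, ((Phibar (Tsel vs α (g u - s u) - g u + hmean)
        - α * Phibar (vs - s u + hmean)) + c * (hmean - g u)) ∂(gaussianPi θ 1) := by
    rw [integral_add hFint (hyint.const_mul c), integral_const_mul, hy0, mul_zero, add_zero]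
  rw [hsplit]
  -- pointwise quadratic bound
  have hpt : ∀ u, ‖(Phibar (Tsel vs α (g u - s u) - g u + hmean)
      - α * Phibar (vs - s u + hmean)) + c * (hmean - g u)‖
      ≤ 5 * C0 * (εg + εs) ^ 2 := by
    intro u
    have hxabs : |g u - s u| ≤ εg + εs :=
      (abs_sub _ _).trans (add_le_add (hgle u) (hsle u))
    have hx1 : |g u - s u| ≤ 1 := hxabs.trans hsum
    have hyabs : |hmean - g u| ≤ 2 * (εg + εs) := by
      have := (abs_sub _ _).trans (add_le_add hmabs (hgle u))
      nlinarith
    have harg1 : Tsel vs α (g u - s u) - g u + hmean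
        = Tsel vs α (g u - s u) + (hmean - g u) := by ring
    have harg2 : vs - s u + hmean = vs + (g u - s u) + (hmean - g u) := by ring
    rw [Real.norm_eq_abs, harg1, harg2]
    have hG := G_bound (vr := vr) hα0 hα1 hL0 hTL hx1 (y := hmean - g u)
    rw [← hcdef, ← hC0] at hG
    have hb1 : (g u - s u) ^ 2 ≤ (εg + εs) ^ 2 := by
      have := pow_le_pow_left₀ (abs_nonneg (g u - s u)) hxabs 2
      rwa [sq_abs] at this
    have hb2 : (hmean - g u) ^ 2 ≤ 4 * (εg + εs) ^ 2 := by
      have := pow_le_pow_left₀ (abs_nonneg (hmean - g u)) hyabs 2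
      rw [sq_abs] at this
      calc (hmean - g u) ^ 2 ≤ (2 * (εg + εs)) ^ 2 := this
        _ = 4 * (εg + εs) ^ 2 := by ring
    calc |Phibar (Tsel vs α (g u - s u) + (hmean - g u))
          - α * Phibar (vs + (g u - s u) + (hmean - g u)) + c * (hmean - g u)|
        ≤ C0 * ((g u - s u) ^ 2 + (hmean - g u) ^ 2) := hG
      _ ≤ C0 * ((εg + εs) ^ 2 + 4 * (εg + εs) ^ 2) := by
          refine mul_le_mul_of_nonneg_left (add_le_add hb1 hb2) hC0pos.le
      _ = 5 * C0 * (εg + εs) ^ 2 := by ring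
  have hfinal := norm_integral_le_of_norm_le (μ := gaussianPi θ 1)
    (integrable_const (5 * C0 * (εg + εs) ^ 2))
    (Filter.Eventually.of_forall hpt)
  rw [Real.norm_eq_abs] at hfinal
  calc |∫ u, ((Phibar (Tsel vs α (g u - s u) - g u + hmean)
        - α * Phibar (vs - s u + hmean)) + c * (hmean - g u)) ∂(gaussianPi θ 1)|
      ≤ ∫ _, 5 * C0 * (εg + εs) ^ 2 ∂(gaussianPi θ 1) := hfinal
    _ = 5 * C0 * (εg + εs) ^ 2 := by simp [integral_const, measure_univ]
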